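/- Let F = L_N ∘ r ∘ L_{N-1} ∘ ⋯ ∘ r ∘ L₁ : ℝⁿ → ℝ^{n_N} be a feed-forward ReLU network, where the L_i are affine maps and r is the entrywise ReLU function. Then for every index i ∈ {1, …, n_N}, the decision region {x ∈ ℝⁿ : F(x)_i > F(x)_j for all j ≠ i} is a semilinear set in ℝⁿ. -/
import Mathlib


open MeasureTheory

/-- A basic semilinear set in ℝⁿ: the set of points where finitely many affine
functions vanish and finitely many affine functions are positive. -/
def IsBasicSemilinear {n : ℕ} (S : Set (Fin n → ℝ)) : Prop :=
  ∃ (k l : ℕ) (f : Fin k → ((Fin n → ℝ) →ᵃ[ℝ] ℝ)) (g : Fin l → ((Fin n → ℝ) →ᵃ[ℝ] ℝ)),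
    S = {x | (∀ i, f i x = 0) ∧ ∀ j, 0 < g j x}

/-- A semilinear set in ℝⁿ is a finite union of basic semilinear sets. -/
def IsSemilinear {n : ℕ} (S : Set (Fin n → ℝ)) : Prop :=
  ∃ (m : ℕ) (B : Fin m → Set (Fin n → ℝ)),
    (∀ i, IsBasicSemilinear (B i)) ∧ S = ⋃ i, B i

/-- A function `f : D → T` is semilinear if every fiber `f⁻¹ {t}` equals the
intersection of `D` with some semilinear set. -/
def IsSemilinearFnOn {n : ℕ} {T : Type*} (D : Set (Fin n → ℝ)) (f : (Fin n → ℝ) → T) : Prop :=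
  ∀ t : T, ∃ S : Set (Fin n → ℝ), IsSemilinear S ∧ {x ∈ D | f x = t} = D ∩ S

/-- Entrywise ReLU. -/
def relu {m : ℕ} (y : Fin m → ℝ) : Fin m → ℝ := fun i => max (y i) 0

lemma basic_of_fintype {n : ℕ} {ι κ : Type} [Fintype ι] [Fintype κ]
    (f : ι → ((Fin n → ℝ) →ᵃ[ℝ] ℝ)) (g : κ → ((Fin n → ℝ) →ᵃ[ℝ] ℝ)) :
    IsBasicSemilinear {x | (∀ i, f i x = 0) ∧ ∀ j, 0 < g j x} := by
  refine ⟨Fintype.card ι, Fintype.card κ, f ∘ (Fintype.equivFin ι).symm,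
    g ∘ (Fintype.equivFin κ).symm, ?_⟩
  ext x
  constructor
  · rintro ⟨h1, h2⟩; exact ⟨fun i => h1 _, fun j => h2 _⟩
  · rintro ⟨h1, h2⟩
    refine ⟨fun i => ?_, fun j => ?_⟩
    · simpa using h1 (Fintype.equivFin ι i)
    · simpa using h2 (Fintype.equivFin κ j)

lemma basic_inter {n : ℕ} {S T : Set (Fin n → ℝ)} (hS : IsBasicSemilinear S)
    (hT : IsBasicSemilinear T) : IsBasicSemilinear (S ∩ T) := by
  obtain ⟨k1, l1, f1, g1, rfl⟩ := hS
  obtain ⟨k2, l2, f2, g2, rfl⟩ := hT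
  have := basic_of_fintype (Sum.elim f1 f2) (Sum.elim g1 g2)
  convert this using 1
  ext x
  simp [Sum.forall, and_assoc, and_left_comm]


lemma semilinear_of_fintype {n : ℕ} {ι : Type} [Fintype ι]
    (B : ι → Set (Fin n → ℝ)) (h : ∀ i, IsBasicSemilinear (B i)) :
    IsSemilinear (⋃ i, B i) := by
  refine ⟨Fintype.card ι, B ∘ (Fintype.equivFin ι).symm, fun i => h _, ?_⟩
  ext x
  simp only [Set.mem_iUnion]
  exact ⟨fun ⟨i, hi⟩ => ⟨Fintype.equivFin ι i, by simpa using hi⟩, fun ⟨i, hi⟩ => ⟨_, hi⟩⟩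


lemma pieces_exist (d : ℕ → ℕ)
    (L : (i : ℕ) → ((Fin (d i) → ℝ) →ᵃ[ℝ] (Fin (d (i+1)) → ℝ)))
    (G : (i : ℕ) → (Fin (d 0) → ℝ) → (Fin (d (i+1)) → ℝ))
    (hG0 : G 0 = fun x => L 0 x)
    (hGsucc : ∀ i : ℕ, G (i+1) = fun x => L (i+1) (relu (G i x))) (N : ℕ) :
    ∃ (ι : Type) (_ : Fintype ι) (P : ι → Set (Fin (d 0) → ℝ))
      (A : ι → ((Fin (d 0) → ℝ) →ᵃ[ℝ] (Fin (d (N+1)) → ℝ))),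
      (∀ k, IsBasicSemilinear (P k)) ∧ (⋃ k, P k) = Set.univ ∧
      ∀ k, ∀ x ∈ P k, G N x = A k x := by
  induction N with
  | zero =>
    refine ⟨PUnit, inferInstance, fun _ => Set.univ, fun _ => L 0, fun _ => ?_, Set.eq_univ_of_forall (fun x => Set.mem_iUnion.2 ⟨PUnit.unit, trivial⟩), ?_⟩
    · have := basic_of_fintype (n := d 0) (Fin.elim0 : Fin 0 → _) (Fin.elim0 : Fin 0 → _)
      convert this using 1
      ext x; simp
    · intro _ x _; rw [hG0]
  | succ N ih =>
    obtain ⟨ι, _, P, A, hP, hcov, hA⟩ := ih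
    refine ⟨ι × (Fin (d (N+1)) → Fin 3), inferInstance,
      fun ks => P ks.1 ∩ {x | (∀ j : {j // ks.2 j = 0}, (AffineMap.proj j.1).comp (A ks.1) x = 0)
        ∧ ∀ j : {j // ks.2 j ≠ 0},
          0 < (if ks.2 j.1 = 1 then (AffineMap.proj j.1).comp (A ks.1)
               else -(AffineMap.proj j.1).comp (A ks.1)) x},
      fun ks => (L (N+1)).comp (AffineMap.pi fun j =>
        if ks.2 j = 1 then (AffineMap.proj j).comp (A ks.1)
        else AffineMap.const ℝ _ 0), ?_, ?_, ?_⟩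
    · intro ks
      exact basic_inter (hP ks.1) (basic_of_fintype _ _)
    · apply Set.eq_univ_of_forall
      intro x
      have hx : x ∈ ⋃ k, P k := by rw [hcov]; trivial
      obtain ⟨k, hk⟩ := Set.mem_iUnion.1 hx
      refine Set.mem_iUnion.2 ⟨⟨k, fun j => if A k x j = 0 then 0 else if 0 < A k x j then 1 else 2⟩,
        hk, fun j => ?_, fun j => ?_⟩
      · obtain ⟨j, hj⟩ := j
        simp only at hj ⊢
        by_cases h0 : A k x j = 0
        · simpa using h0
        · simp [h0] at hj
          split at hj <;> simp_all
      · obtain ⟨j, hj⟩ := j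
        simp only at hj ⊢
        by_cases h0 : A k x j = 0
        · simp [h0] at hj
        · by_cases h1 : 0 < A k x j
          · simp [h0, h1]
          · simp only [h0, if_false, h1] at hj ⊢
            simp only [if_neg (by decide : (2:Fin 3) ≠ 1)]
            simp only [AffineMap.coe_neg, Pi.neg_apply, AffineMap.comp_apply, AffineMap.proj_apply]
            push_neg at h1
            exact neg_pos.2 (lt_of_le_of_ne h1 h0)
    · rintro ⟨k, s⟩ x ⟨hxP, hxe, hxg⟩
      have hGx : G N x = A k x := hA k x hxP
      rw [hGsucc]
      simp only [AffineMap.comp_apply]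
      congr 1
      funext j
      simp only [relu, hGx, AffineMap.pi_apply]
      by_cases h1 : s j = 1
      · have := hxg ⟨j, by simp [h1]⟩
        simp only [h1, if_true] at this ⊢
        simp only [AffineMap.comp_apply, AffineMap.proj_apply] at this ⊢
        exact max_eq_left this.le
      · by_cases h0 : s j = 0
        · have := hxe ⟨j, h0⟩
          simp only [AffineMap.comp_apply, AffineMap.proj_apply] at this
          simp [h1, this, AffineMap.const_apply]
        · have := hxg ⟨j, h0⟩
          simp only [if_neg h1] at this
          simp only [AffineMap.coe_neg, Pi.neg_apply, AffineMap.comp_apply, AffineMap.proj_apply] at this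
          simp [h1, AffineMap.const_apply, max_eq_right (neg_pos.1 this).le]


/-- The decision regions of a feed-forward ReLU network are semilinear sets. -/
theorem reluNetwork_decision_regions_semilinear (N : ℕ) (d : ℕ → ℕ)
    (L : (i : ℕ) → ((Fin (d i) → ℝ) →ᵃ[ℝ] (Fin (d (i+1)) → ℝ)))
    (G : (i : ℕ) → (Fin (d 0) → ℝ) → (Fin (d (i+1)) → ℝ))
    (hG0 : G 0 = fun x => L 0 x)
    (hGsucc : ∀ i : ℕ, G (i+1) = fun x => L (i+1) (relu (G i x))) :
    ∀ i : Fin (d (N+1)),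
      IsSemilinear {x : Fin (d 0) → ℝ | ∀ j : Fin (d (N+1)), j ≠ i → G N x j < G N x i} := by
  intro i
  obtain ⟨ι, _, P, A, hP, hcov, hA⟩ := pieces_exist d L G hG0 hGsucc N
  have key : {x : Fin (d 0) → ℝ | ∀ j : Fin (d (N+1)), j ≠ i → G N x j < G N x i}
      = ⋃ k, P k ∩ {x | (∀ e : Fin 0, (Fin.elim0 e : (Fin (d 0) → ℝ) →ᵃ[ℝ] ℝ) x = 0) ∧
          ∀ j : {j : Fin (d (N+1)) // j ≠ i},
            0 < ((AffineMap.proj i).comp (A k) - (AffineMap.proj j.1).comp (A k)) x} := by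
    ext x
    simp only [Set.mem_setOf_eq, Set.mem_iUnion, Set.mem_inter_iff]
    constructor
    · intro hx
      have hxu : x ∈ ⋃ k, P k := by rw [hcov]; trivial
      obtain ⟨k, hk⟩ := Set.mem_iUnion.1 hxu
      refine ⟨k, hk, fun e => e.elim0, fun j => ?_⟩
      have h := hx j.1 j.2
      rw [hA k x hk] at h
      simp only [AffineMap.coe_sub, Pi.sub_apply, AffineMap.comp_apply, AffineMap.proj_apply]
      linarith
    · rintro ⟨k, hk, -, hg⟩
      intro j hj
      have h := hg ⟨j, hj⟩
      simp only [AffineMap.coe_sub, Pi.sub_apply, AffineMap.comp_apply,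
        AffineMap.proj_apply] at h
      rw [hA k x hk]
      linarith
  rw [key]
  exact semilinear_of_fintype _ fun k => basic_inter (hP k) (basic_of_fintype _ _)
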